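/- Let H = (V, E) be a hypergraph. Then H is 1-Sperner if and only if the edge-clique split graph of H is clique-Sperner (with respect to the split partition (E, V)) and has no induced subgraph isomorphic to the graph H₀, where H₀ is the 6-vertex graph obtained from the disjoint union of two paths on three vertices by adding an edge between the two middle vertices. -/

import Mathlib

open Finset

open scoped Classical

/-- A hypergraph (given by its set of hyperedges, each a finite set of vertices)
is 1-Sperner if every two distinct hyperedges `e` and `f` satisfy
`min |e \ f| |f \ e| = 1`. -/
def OneSperner {V : Type*} [DecidableEq V] (E : Set (Finset V)) : Prop :=
  ∀ e ∈ E, ∀ f ∈ E, e ≠ f → min (e \ f).card (f \ e).card = 1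

/-- A set of vertices `X` is dependent in the hypergraph with hyperedge set `E`
if it contains some hyperedge; it is independent otherwise. -/
def HypDep {V : Type*} (E : Set (Finset V)) (X : Finset V) : Prop :=
  ∃ e ∈ E, e ⊆ X

/-- A hypergraph is threshold if there are nonnegative integer vertex weights and a
threshold such that a vertex set has weight at least the threshold iff it contains
a hyperedge. -/
def HypThreshold {V : Type*} [Fintype V] (E : Set (Finset V)) : Prop :=
  ∃ (w : V → ℕ) (t : ℕ), ∀ X : Finset V, (t ≤ ∑ x ∈ X, w x) ↔ HypDep E X

/-- The characteristic vector of a finite vertex set. -/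
def chiVec {V : Type*} [DecidableEq V] (X : Finset V) : V → ℕ :=
  fun v => if v ∈ X then 1 else 0

/-- A hypergraph is 2-asummable if there are no two independent sets `A₁, A₂`
and two dependent sets `B₁, B₂` with `χ^{A₁} + χ^{A₂} = χ^{B₁} + χ^{B₂}`. -/
def TwoAsummable {V : Type*} [DecidableEq V] (E : Set (Finset V)) : Prop :=
  ¬ ∃ A₁ A₂ B₁ B₂ : Finset V,
      ¬ HypDep E A₁ ∧ ¬ HypDep E A₂ ∧ HypDep E B₁ ∧ HypDep E B₂ ∧
      ∀ v, chiVec A₁ v + chiVec A₂ v = chiVec B₁ v + chiVec B₂ v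

/-- A graph is threshold if there are nonnegative integer vertex weights and a threshold
such that a vertex set has weight at most the threshold iff it is an independent set. -/
def ThresholdGraph {V : Type*} [Fintype V] (G : SimpleGraph V) : Prop :=
  ∃ (w : V → ℕ) (t : ℕ), ∀ X : Finset V,
    ((∑ x ∈ X, w x) ≤ t ↔ ∀ u ∈ X, ∀ v ∈ X, ¬ G.Adj u v)

/-- A vertex cover of a graph: every edge has an endpoint in the set. -/
def IsVertexCover {V : Type*} (G : SimpleGraph V) (S : Finset V) : Prop :=
  ∀ u v : V, G.Adj u v → u ∈ S ∨ v ∈ S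

/-- The vertex cover hypergraph: hyperedges are the inclusion-minimal vertex covers. -/
def VCHyp {V : Type*} (G : SimpleGraph V) : Set (Finset V) :=
  {S | IsVertexCover G S ∧ ∀ T : Finset V, IsVertexCover G T → T ⊆ S → T = S}

/-- The clique hypergraph: hyperedges are the inclusion-maximal cliques. -/
def CliqueHyp {V : Type*} (G : SimpleGraph V) : Set (Finset V) :=
  {S | G.IsClique (S : Set V) ∧ ∀ T : Finset V, G.IsClique (T : Set V) → S ⊆ T → T = S}

/-- The closed neighborhood `N[v]` of a vertex, as a finite set. -/
def closedNbhd {V : Type*} [Fintype V] [DecidableEq V] (G : SimpleGraph V)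
    [DecidableRel G.Adj] (v : V) : Finset V :=
  insert v (G.neighborFinset v)

/-- The closed neighborhood hypergraph: hyperedges are the inclusion-minimal sets of
the form `N[v]`. -/
def NHyp {V : Type*} [Fintype V] [DecidableEq V] (G : SimpleGraph V)
    [DecidableRel G.Adj] : Set (Finset V) :=
  {S | (∃ v : V, S = closedNbhd G v) ∧
       ∀ v : V, closedNbhd G v ⊆ S → closedNbhd G v = S}

/-- A dominating set: every vertex is in the set or has a neighbor in it. -/
def IsDomSet {V : Type*} (G : SimpleGraph V) (D : Finset V) : Prop :=
  ∀ v : V, v ∈ D ∨ ∃ u ∈ D, G.Adj u v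

/-- The dominating set hypergraph: hyperedges are the inclusion-minimal dominating sets. -/
def DomHyp {V : Type*} (G : SimpleGraph V) : Set (Finset V) :=
  {D | IsDomSet G D ∧ ∀ T : Finset V, IsDomSet G T → T ⊆ D → T = D}

/-- A graph is domishold if there are nonnegative integer vertex weights and a threshold
such that a vertex set has weight at least the threshold iff it is a dominating set. -/
def Domishold {V : Type*} [Fintype V] (G : SimpleGraph V) : Prop :=
  ∃ (w : V → ℕ) (t : ℕ), ∀ X : Finset V, (t ≤ ∑ x ∈ X, w x) ↔ IsDomSet G X

/-- `(K, I)` is a split partition of `G`: `K` is a clique, `I` an independent set,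
they are disjoint and cover all vertices. -/
def IsSplitPartition {V : Type*} [Fintype V] (G : SimpleGraph V) (K I : Finset V) : Prop :=
  Disjoint K I ∧ K ∪ I = Finset.univ ∧ G.IsClique (K : Set V) ∧
    ∀ u ∈ I, ∀ v ∈ I, ¬ G.Adj u v

/-- The labeled split graph `(G, K, I)` is clique-Sperner: for `u, v ∈ K`,
`N(u) ∩ I ⊆ N(v) ∩ I` implies `u = v`. -/
def CliqueSperner {V : Type*} (G : SimpleGraph V) (K I : Finset V) : Prop :=
  ∀ u ∈ K, ∀ v ∈ K,
    G.neighborSet u ∩ (I : Set V) ⊆ G.neighborSet v ∩ (I : Set V) → u = v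

/-- The labeled split graph `(G, K, I)` is independent-Sperner: for `u, v ∈ I`,
`N(u) ⊆ N(v)` implies `u = v`. -/
def IndependentSperner {V : Type*} (G : SimpleGraph V) (K I : Finset V) : Prop :=
  ∀ u ∈ I, ∀ v ∈ I, G.neighborSet u ⊆ G.neighborSet v → u = v

/-- `(A, B)` is a bipartition of `G` into two disjoint independent sets covering
all vertices. -/
def IsBipartition {V : Type*} [Fintype V] (G : SimpleGraph V) (A B : Finset V) : Prop :=
  Disjoint A B ∧ A ∪ B = Finset.univ ∧
    (∀ u ∈ A, ∀ v ∈ A, ¬ G.Adj u v) ∧ (∀ u ∈ B, ∀ v ∈ B, ¬ G.Adj u v)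

/-- The labeled bigraph `(G, A, B)` is right-Sperner: for `u, v ∈ B`,
`N(u) ⊆ N(v)` implies `u = v`. -/
def RightSperner {V : Type*} (G : SimpleGraph V) (A B : Finset V) : Prop :=
  ∀ u ∈ B, ∀ v ∈ B, G.neighborSet u ⊆ G.neighborSet v → u = v

/-- The graph `2P₃`: disjoint union of the paths `0-1-2` and `3-4-5`. -/
def twoP3 : SimpleGraph (Fin 6) :=
  SimpleGraph.fromRel (fun u v =>
    (u, v) ∈ ([(0,1),(1,2),(3,4),(4,5)] : List (Fin 6 × Fin 6)))

/-- The graph `H`: obtained from `2P₃` (paths `0-1-2` and `3-4-5`) by adding the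
edge `1-4` between the two middle vertices. -/
def graphH : SimpleGraph (Fin 6) :=
  SimpleGraph.fromRel (fun u v =>
    (u, v) ∈ ([(0,1),(1,2),(3,4),(4,5),(1,4)] : List (Fin 6 × Fin 6)))

/-- The domination number: minimum size of a dominating set. -/
noncomputable def gamma {W : Type*} [Fintype W] (G : SimpleGraph W) : ℕ :=
  sInf {n | ∃ D : Finset W, IsDomSet G D ∧ D.card = n}

/-- The total domination number: minimum size of a total dominating set. -/
noncomputable def gammaT {W : Type*} [Fintype W] (G : SimpleGraph W) : ℕ :=
  sInf {n | ∃ D : Finset W, (∀ v : W, ∃ u ∈ D, G.Adj u v) ∧ D.card = n}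

/-- The connected domination number: minimum size of a connected dominating set. -/
noncomputable def gammaC {W : Type*} [Fintype W] (G : SimpleGraph W) : ℕ :=
  sInf {n | ∃ D : Finset W, IsDomSet G D ∧ (G.induce (D : Set W)).Connected ∧ D.card = n}

/-- The co-occurrence graph of a hypergraph: two distinct vertices are adjacent iff
some hyperedge contains both. -/
def coOccurrenceGraph {W : Type*} (E : Set (Finset W)) : SimpleGraph W where
  Adj u v := u ≠ v ∧ ∃ e ∈ E, u ∈ e ∧ v ∈ e
  symm := by
    constructor
    rintro u v ⟨h, e, he, hu, hv⟩
    exact ⟨h.symm, e, he, hv, hu⟩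
  loopless := by
    constructor
    rintro u ⟨h, -⟩
    exact h rfl

/-- The edge-clique split graph of a hypergraph `(V, E)`: vertex set `E ⊕ V`, the
hyperedges form a clique, the vertices an independent set, and `v ∈ V` is adjacent
to `e ∈ E` iff `v ∈ e`. -/
def edgeCliqueGraph {V : Type*} (E : Finset (Finset V)) :
    SimpleGraph ({e // e ∈ E} ⊕ V) where
  Adj x y :=
    match x, y with
    | Sum.inl e, Sum.inl f => e ≠ f
    | Sum.inl e, Sum.inr v => v ∈ (e : Finset V)
    | Sum.inr v, Sum.inl e => v ∈ (e : Finset V)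
    | Sum.inr _, Sum.inr _ => False
  symm := by
    constructor
    rintro (e | u) (f | v) h
    · exact Ne.symm h
    · exact h
    · exact h
    · exact h.elim
  loopless := by
    constructor
    rintro (e | v) h
    · exact h rfl
    · exact h


lemma vec6_five {α : Type*} (a b c d e f : α) :
    (![a, b, c, d, e, f] : Fin 6 → α) 5 = f := rfl

lemma graphH_adj_iff (a b : Fin 6) : graphH.Adj a b ↔ a ≠ b ∧
    ((a, b) ∈ ([(0,1),(1,2),(3,4),(4,5),(1,4)] : List (Fin 6 × Fin 6)) ∨
     (b, a) ∈ ([(0,1),(1,2),(3,4),(4,5),(1,4)] : List (Fin 6 × Fin 6))) := Iff.rfl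

instance : DecidableRel graphH.Adj :=
  fun a b => decidable_of_iff' _ (graphH_adj_iff a b)

lemma ecg_adj_inl_inl {V : Type*} (E : Finset (Finset V)) (e f : {x // x ∈ E}) :
    (edgeCliqueGraph E).Adj (Sum.inl e) (Sum.inl f) ↔ e ≠ f := Iff.rfl

lemma ecg_adj_inl_inr {V : Type*} (E : Finset (Finset V)) (e : {x // x ∈ E}) (v : V) :
    (edgeCliqueGraph E).Adj (Sum.inl e) (Sum.inr v) ↔ v ∈ (e : Finset V) := Iff.rfl

lemma ecg_adj_inr_inl {V : Type*} (E : Finset (Finset V)) (e : {x // x ∈ E}) (v : V) :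
    (edgeCliqueGraph E).Adj (Sum.inr v) (Sum.inl e) ↔ v ∈ (e : Finset V) := Iff.rfl

lemma ecg_adj_inr_inr {V : Type*} (E : Finset (Finset V)) (u v : V) :
    (edgeCliqueGraph E).Adj (Sum.inr u) (Sum.inr v) ↔ False := Iff.rfl

set_option maxHeartbeats 1000000 in
theorem stmt19 {V : Type*} [DecidableEq V] (E : Finset (Finset V)) :
    OneSperner (E : Set (Finset V)) ↔
      ((∀ e f : {x // x ∈ E},
          (∀ v : V, (edgeCliqueGraph E).Adj (Sum.inl e) (Sum.inr v) →
            (edgeCliqueGraph E).Adj (Sum.inl f) (Sum.inr v)) → e = f) ∧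
        ¬ Nonempty (graphH ↪g edgeCliqueGraph E)) := by
  constructor
  · intro hOS
    constructor
    · -- clique-Sperner
      rintro ⟨e, he⟩ ⟨f, hf⟩ hsub
      simp only [ecg_adj_inl_inr] at hsub
      by_contra hne
      have hne' : e ≠ f := fun h => hne (Subtype.ext h)
      have := hOS e he f hf hne'
      have h0 : (e \ f).card = 0 := by
        rw [Finset.card_eq_zero, Finset.sdiff_eq_empty_iff_subset]
        exact fun v hv => hsub v hv
      rw [h0] at this
      simp at this
    · -- no induced H
      rintro ⟨φ⟩
      -- φ 1 must be inl
      have key : ∀ a b c : Fin 6, graphH.Adj a b → graphH.Adj a c → ¬ graphH.Adj b c →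
          b ≠ c → ∃ e, φ a = Sum.inl e := by
        intro a b c hab hac hbc hbcne
        rcases hφa : φ a with e | v
        · exact ⟨e, rfl⟩
        · exfalso
          have h1 : (edgeCliqueGraph E).Adj (φ a) (φ b) := φ.map_rel_iff.2 hab
          have h2 : (edgeCliqueGraph E).Adj (φ a) (φ c) := φ.map_rel_iff.2 hac
          rw [hφa] at h1 h2
          rcases hφb : φ b with eb | vb
          · rcases hφc : φ c with ec | vc
            · have h3 : ¬ (edgeCliqueGraph E).Adj (φ b) (φ c) := fun h => hbc (φ.map_rel_iff.1 h)
              rw [hφb, hφc, ecg_adj_inl_inl, not_ne_iff] at h3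
              exact hbcne (φ.injective (by rw [hφb, hφc, h3]))
            · rw [hφc] at h2
              exact (ecg_adj_inr_inr E v vc).1 h2
          · rw [hφb] at h1
            exact (ecg_adj_inr_inr E v vb).1 h1
      obtain ⟨e, h1⟩ := key 1 0 2 (by decide) (by decide) (by decide) (by decide)
      obtain ⟨f, h4⟩ := key 4 3 5 (by decide) (by decide) (by decide) (by decide)
      have hef : e ≠ f := fun h => by
        have : φ 1 = φ 4 := by rw [h1, h4, h]
        exact absurd (φ.injective this) (by decide)
      -- the leaves go to inr
      have leaf : ∀ a : Fin 6, a ≠ 4 → graphH.Adj a 1 → ¬ graphH.Adj a 4 →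
          ∃ v, φ a = Sum.inr v ∧ v ∈ (e : Finset V) ∧ v ∉ (f : Finset V) := by
        intro a hane ha1 ha4
        have had : (edgeCliqueGraph E).Adj (φ a) (φ 1) := φ.map_rel_iff.2 ha1
        have hnad : ¬ (edgeCliqueGraph E).Adj (φ a) (φ 4) := fun h => ha4 (φ.map_rel_iff.1 h)
        rw [h1] at had; rw [h4] at hnad
        rcases hφa : φ a with g | v
        · exfalso
          rw [hφa, ecg_adj_inl_inl, not_ne_iff] at hnad
          have : φ a = φ 4 := by rw [hφa, h4, hnad]
          exact hane (φ.injective this)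
        · rw [hφa] at had hnad
          exact ⟨v, rfl, (ecg_adj_inr_inl E e v).1 had, fun hm => hnad ((ecg_adj_inr_inl E f v).2 hm)⟩
      have leaf' : ∀ a : Fin 6, a ≠ 1 → graphH.Adj a 4 → ¬ graphH.Adj a 1 →
          ∃ v, φ a = Sum.inr v ∧ v ∈ (f : Finset V) ∧ v ∉ (e : Finset V) := by
        intro a hane ha1 ha4
        have had : (edgeCliqueGraph E).Adj (φ a) (φ 4) := φ.map_rel_iff.2 ha1
        have hnad : ¬ (edgeCliqueGraph E).Adj (φ a) (φ 1) := fun h => ha4 (φ.map_rel_iff.1 h)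
        rw [h4] at had; rw [h1] at hnad
        rcases hφa : φ a with g | v
        · exfalso
          rw [hφa, ecg_adj_inl_inl, not_ne_iff] at hnad
          have : φ a = φ 1 := by rw [hφa, h1, hnad]
          exact hane (φ.injective this)
        · rw [hφa] at had hnad
          exact ⟨v, rfl, (ecg_adj_inr_inl E f v).1 had, fun hm => hnad ((ecg_adj_inr_inl E e v).2 hm)⟩
      obtain ⟨v0, hv0, hv0e, hv0f⟩ := leaf 0 (by decide) (by decide) (by decide)
      obtain ⟨v2, hv2, hv2e, hv2f⟩ := leaf 2 (by decide) (by decide) (by decide)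
      obtain ⟨v3, hv3, hv3f, hv3e⟩ := leaf' 3 (by decide) (by decide) (by decide)
      obtain ⟨v5, hv5, hv5f, hv5e⟩ := leaf' 5 (by decide) (by decide) (by decide)
      have h02 : v0 ≠ v2 := fun h => by
        have : φ 0 = φ 2 := by rw [hv0, hv2, h]
        exact absurd (φ.injective this) (by decide)
      have h35 : v3 ≠ v5 := fun h => by
        have : φ 3 = φ 5 := by rw [hv3, hv5, h]
        exact absurd (φ.injective this) (by decide)
      have hcard1 : 2 ≤ ((e : Finset V) \ f).card := by
        apply Finset.one_lt_card.2
        exact ⟨v0, Finset.mem_sdiff.2 ⟨hv0e, hv0f⟩, v2, Finset.mem_sdiff.2 ⟨hv2e, hv2f⟩, h02⟩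
      have hcard2 : 2 ≤ ((f : Finset V) \ e).card := by
        apply Finset.one_lt_card.2
        exact ⟨v3, Finset.mem_sdiff.2 ⟨hv3f, hv3e⟩, v5, Finset.mem_sdiff.2 ⟨hv5f, hv5e⟩, h35⟩
      have hne : (e : Finset V) ≠ (f : Finset V) := fun h => hef (Subtype.ext h)
      have := hOS e e.2 f f.2 hne
      omega
  · rintro ⟨hCS, hNoH⟩ e he f hf hne
    have h1 : ¬ (e ⊆ f) := fun h => hne (congrArg Subtype.val
      (hCS ⟨e, he⟩ ⟨f, hf⟩ (fun v hv => h hv)))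
    have h2 : ¬ (f ⊆ e) := fun h => hne.symm (congrArg Subtype.val
      (hCS ⟨f, hf⟩ ⟨e, he⟩ (fun v hv => h hv)))
    have hc1 : 1 ≤ (e \ f).card := Finset.card_pos.2 (Finset.sdiff_nonempty.2 h1)
    have hc2 : 1 ≤ (f \ e).card := Finset.card_pos.2 (Finset.sdiff_nonempty.2 h2)
    by_contra hmin
    have hbig : 2 ≤ (e \ f).card ∧ 2 ≤ (f \ e).card := by omega
    obtain ⟨v0, hv0, v2, hv2, h02⟩ := Finset.one_lt_card.1 hbig.1
    obtain ⟨v3, hv3, v5, hv5, h35⟩ := Finset.one_lt_card.1 hbig.2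
    rw [Finset.mem_sdiff] at hv0 hv2 hv3 hv5
    have h03 : v0 ≠ v3 := fun h => hv3.2 (h ▸ hv0.1)
    have h05 : v0 ≠ v5 := fun h => hv5.2 (h ▸ hv0.1)
    have h23 : v2 ≠ v3 := fun h => hv3.2 (h ▸ hv2.1)
    have h25 : v2 ≠ v5 := fun h => hv5.2 (h ▸ hv2.1)
    apply hNoH
    refine ⟨⟨⟨![Sum.inr v0, Sum.inl ⟨e, he⟩, Sum.inr v2, Sum.inr v3, Sum.inl ⟨f, hf⟩, Sum.inr v5],
      ?_⟩, ?_⟩⟩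
    · intro a b hab
      fin_cases a <;> fin_cases b <;> simp [vec6_five] at hab <;>
        first
          | rfl
          | exact absurd hab hne
          | exact absurd hab (Ne.symm hne)
          | exact absurd hab h02
          | exact absurd hab (Ne.symm h02)
          | exact absurd hab h35
          | exact absurd hab (Ne.symm h35)
          | exact absurd hab h03
          | exact absurd hab (Ne.symm h03)
          | exact absurd hab h05
          | exact absurd hab (Ne.symm h05)
          | exact absurd hab h23
          | exact absurd hab (Ne.symm h23)
          | exact absurd hab h25
          | exact absurd hab (Ne.symm h25)
    · intro a b
      change (edgeCliqueGraph E).Adj ((![Sum.inr v0, Sum.inl ⟨e, he⟩, Sum.inr v2, Sum.inr v3, Sum.inl ⟨f, hf⟩, Sum.inr v5] : Fin 6 → _) a)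
        ((![Sum.inr v0, Sum.inl ⟨e, he⟩, Sum.inr v2, Sum.inr v3, Sum.inl ⟨f, hf⟩, Sum.inr v5] : Fin 6 → _) b) ↔ graphH.Adj a b
      fin_cases a <;> fin_cases b <;>
        simp [vec6_five, ecg_adj_inl_inl, ecg_adj_inl_inr, ecg_adj_inr_inl, ecg_adj_inr_inr,
          graphH_adj_iff, Subtype.ext_iff, hne, Ne.symm hne, h02, Ne.symm h02,
          h35, Ne.symm h35, h03, Ne.symm h03, h05, Ne.symm h05, h23, Ne.symm h23,
          h25, Ne.symm h25, hv0.1, hv0.2, hv2.1, hv2.2, hv3.1, hv3.2, hv5.1, hv5.2]
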